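/- For all real numbers a and x and every λ > 0, setting x̃ = x·1{|x| ≥ λ} (hard thresholding of x at level λ), one has (a − x̃)² ≤ 5·(a − x)²·1{|a| ≥ λ/2} + (a − x)²·1{|a − x| ≥ λ/2} + a²·1{|a| < 2λ}. -/
import Mathlib


/-- **Pointwise hard-thresholding inequality.**
For all reals `a`, `x` and every `λ > 0`, with `x̃ = x·1{|x| ≥ λ}` the hard
thresholding of `x` at level `λ`,
`(a − x̃)² ≤ 5·(a−x)²·1{|a| ≥ λ/2} + (a−x)²·1{|a−x| ≥ λ/2} + a²·1{|a| < 2λ}`. -/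
theorem hard_threshold_pointwise (a x lam : ℝ) (hlam : 0 < lam) :
    (a - x * (if lam ≤ |x| then 1 else 0)) ^ 2 ≤
      5 * (a - x) ^ 2 * (if lam / 2 ≤ |a| then 1 else 0)
        + (a - x) ^ 2 * (if lam / 2 ≤ |a - x| then 1 else 0)
        + a ^ 2 * (if |a| < 2 * lam then 1 else 0) := by
  have h1 : |a| - |x| ≤ |a - x| := abs_sub_abs_le_abs_sub a x
  have h2 : |x| - |a| ≤ |a - x| := by
    have := abs_sub_abs_le_abs_sub x a
    rwa [abs_sub_comm] at this
  have ha : a ^ 2 = |a| ^ 2 := (sq_abs a).symm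
  have hax : (a - x) ^ 2 = |a - x| ^ 2 := (sq_abs (a - x)).symm
  have hna : 0 ≤ |a| := abs_nonneg a
  have hnax : 0 ≤ |a - x| := abs_nonneg (a - x)
  by_cases c1 : lam ≤ |x|
  · -- LHS = (a - x)^2
    rw [if_pos c1]
    by_cases c2 : lam / 2 ≤ |a|
    · rw [if_pos c2]
      have t2 : 0 ≤ (a - x) ^ 2 * (if lam / 2 ≤ |a - x| then 1 else 0) := by
        positivity
      have t3 : 0 ≤ a ^ 2 * (if |a| < 2 * lam then 1 else 0) := by positivity
      nlinarith [sq_nonneg (a - x)]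
    · rw [if_neg c2]
      push_neg at c2
      have c3 : lam / 2 ≤ |a - x| := by linarith
      rw [if_pos c3]
      have t3 : 0 ≤ a ^ 2 * (if |a| < 2 * lam then 1 else 0) := by positivity
      nlinarith
  · -- LHS = a^2
    rw [if_neg c1]
    push_neg at c1
    by_cases c4 : |a| < 2 * lam
    · rw [if_pos c4]
      have t1 : 0 ≤ 5 * (a - x) ^ 2 * (if lam / 2 ≤ |a| then 1 else 0) := by
        positivity
      have t2 : 0 ≤ (a - x) ^ 2 * (if lam / 2 ≤ |a - x| then 1 else 0) := by
        positivity
      nlinarith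
    · rw [if_neg c4]
      push_neg at c4
      have c2 : lam / 2 ≤ |a| := by linarith
      rw [if_pos c2]
      have c3 : lam / 2 ≤ |a - x| := by linarith
      rw [if_pos c3]
      -- |a - x| ≥ |a| - |x| > |a| - lam ≥ |a|/2, so a^2 ≤ 4(a-x)^2 ≤ 6(a-x)^2
      have key : |a| / 2 ≤ |a - x| := by linarith
      nlinarith
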